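/- (Key descent inequality) Let f : ℝⁿ → ℝ be convex, differentiable, L-smooth, and m-strongly convex (m ≥ 0), and g : ℝⁿ → ℝ convex. Let U be symmetric with U ⪰ L·I. Given x, let x⁺ = prox_{g,U}(x − U⁻¹∇f(x)) and define G_U(x) = U(x − x⁺). Then for all z ∈ ℝⁿ: F(x⁺) ≤ F(z) + ⟨G_U(x), x − z⟩ − (m/2)‖z − x‖₂² − (1/2)‖G_U(x)‖²_{U⁻¹}, where F = f + g and ‖p‖²_{U⁻¹} = pᵀU⁻¹p. -/

import Mathlib

noncomputable section

/-- Euclidean dot product on `Fin n → ℝ`. -/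
def dot {n : ℕ} (a b : Fin n → ℝ) : ℝ := ∑ i, a i * b i

/-- Squared Euclidean norm. -/
def sqnorm {n : ℕ} (a : Fin n → ℝ) : ℝ := dot a a

open Matrix

lemma dot_eq {n : ℕ} (a b : Fin n → ℝ) : dot a b = a ⬝ᵥ b := rfl

lemma sqnorm_nonneg {n : ℕ} (a : Fin n → ℝ) : 0 ≤ sqnorm a := by
  unfold sqnorm dot
  exact Finset.sum_nonneg fun _ _ => mul_self_nonneg _

lemma sqnorm_smul {n : ℕ} (t : ℝ) (a : Fin n → ℝ) : sqnorm (t • a) = t ^ 2 * sqnorm a := by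
  simp only [sqnorm, dot, Pi.smul_apply, smul_eq_mul, Finset.mul_sum]
  exact Finset.sum_congr rfl fun i _ => by ring

lemma sqnorm_neg_sub {n : ℕ} (a b : Fin n → ℝ) : sqnorm (a - b) = sqnorm (b - a) := by
  simp only [sqnorm, dot, Pi.sub_apply]
  exact Finset.sum_congr rfl fun i _ => by ring

lemma dot_sub_left {n : ℕ} (a b c : Fin n → ℝ) : dot (a - b) c = dot a c - dot b c := by
  simp only [dot, Pi.sub_apply, sub_mul, Finset.sum_sub_distrib]

lemma dot_add_right {n : ℕ} (a b c : Fin n → ℝ) : dot a (b + c) = dot a b + dot a c := by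
  simp only [dot, Pi.add_apply, mul_add, Finset.sum_add_distrib]

lemma dot_neg_right {n : ℕ} (a b : Fin n → ℝ) : dot a (-b) = -dot a b := by
  simp only [dot, Pi.neg_apply, mul_neg, Finset.sum_neg_distrib]

lemma dot_comm {n : ℕ} (a b : Fin n → ℝ) : dot a b = dot b a := by
  simp only [dot]
  exact Finset.sum_congr rfl fun i _ => mul_comm _ _

/-- Cauchy–Schwarz. -/
lemma dot_le_sqrt {n : ℕ} (a b : Fin n → ℝ) :
    dot a b ≤ Real.sqrt (sqnorm a) * Real.sqrt (sqnorm b) := by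
  have h := Finset.sum_mul_sq_le_sq_mul_sq Finset.univ a b
  have h2 : (dot a b) ^ 2 ≤ sqnorm a * sqnorm b := by
    simpa [dot, sqnorm, sq] using h
  calc dot a b ≤ |dot a b| := le_abs_self _
    _ = Real.sqrt ((dot a b) ^ 2) := (Real.sqrt_sq_eq_abs _).symm
    _ ≤ Real.sqrt (sqnorm a * sqnorm b) := Real.sqrt_le_sqrt h2
    _ = _ := Real.sqrt_mul (sqnorm_nonneg a) _

section deriv

variable {n : ℕ} (f : (Fin n → ℝ) → ℝ) (f' : (Fin n → ℝ) → (Fin n → ℝ))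

lemma line_deriv (hdiff : ∀ x v, HasDerivAt (fun t : ℝ => f (x + t • v)) (dot (f' x) v) 0)
    (x v : Fin n → ℝ) (t : ℝ) :
    HasDerivAt (fun s : ℝ => f (x + s • v)) (dot (f' (x + t • v)) v) t := by
  have hg : HasDerivAt (fun s : ℝ => s - t) 1 t := by
    simpa using (hasDerivAt_id t).sub_const t
  have h0 := (hdiff (x + t • v) v).comp_of_eq t hg (sub_self t).symm
  have he : (fun s : ℝ => f (x + t • v + (s - t) • v)) = fun s : ℝ => f (x + s • v) := by
    funext s
    congr 1
    rw [sub_smul]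
    abel
  rw [Function.comp_def] at h0
  rw [he] at h0
  simpa using h0

/-- Descent lemma from Lipschitz gradients. -/
lemma descent_lemma (L : ℝ) (hL : 0 < L)
    (hdiff : ∀ x v, HasDerivAt (fun t : ℝ => f (x + t • v)) (dot (f' x) v) 0)
    (hsmooth : ∀ x y, Real.sqrt (sqnorm (f' x - f' y)) ≤ L * Real.sqrt (sqnorm (x - y)))
    (x v : Fin n → ℝ) :
    f (x + v) ≤ f x + dot (f' x) v + L / 2 * sqnorm v := by
  set φ : ℝ → ℝ := fun t => f (x + t • v) - t * dot (f' x) v - L / 2 * t ^ 2 * sqnorm v with hφ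
  have hder : ∀ t : ℝ, HasDerivAt φ
      (dot (f' (x + t • v)) v - dot (f' x) v - L * t * sqnorm v) t := by
    intro t
    have h1 := line_deriv f f' hdiff x v t
    have h2 : HasDerivAt (fun s : ℝ => s * dot (f' x) v) (dot (f' x) v) t := by
      simpa using (hasDerivAt_id t).mul_const (dot (f' x) v)
    have h3 : HasDerivAt (fun s : ℝ => L / 2 * s ^ 2 * sqnorm v) (L * t * sqnorm v) t := by
      have := ((hasDerivAt_pow 2 t).const_mul (L / 2)).mul_const (sqnorm v)
      refine this.congr_deriv ?_
      simp only [show (2:ℕ) - 1 = 1 from rfl, pow_one]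
      ring
    exact (h1.sub h2).sub h3
  have hderiv_le : ∀ t ∈ interior (Set.Icc (0:ℝ) 1), deriv φ t ≤ 0 := by
    intro t ht
    rw [interior_Icc, Set.mem_Ioo] at ht
    rw [(hder t).deriv]
    have hcs : dot (f' (x + t • v) - f' x) v ≤
        Real.sqrt (sqnorm (f' (x + t • v) - f' x)) * Real.sqrt (sqnorm v) := dot_le_sqrt _ _
    have hlips : Real.sqrt (sqnorm (f' (x + t • v) - f' x)) ≤
        L * (t * Real.sqrt (sqnorm v)) := by
      have hs := hsmooth (x + t • v) x
      have hx : x + t • v - x = t • v := by abel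
      rw [hx, sqnorm_smul, Real.sqrt_mul (sq_nonneg t), Real.sqrt_sq_eq_abs,
        abs_of_pos ht.1] at hs
      linarith
    have hmul : Real.sqrt (sqnorm v) * Real.sqrt (sqnorm v) = sqnorm v :=
      Real.mul_self_sqrt (sqnorm_nonneg v)
    have hfin := hcs.trans (mul_le_mul_of_nonneg_right hlips (Real.sqrt_nonneg _))
    rw [dot_sub_left] at hfin
    have e : L * (t * Real.sqrt (sqnorm v)) * Real.sqrt (sqnorm v) = L * t * sqnorm v := by
      calc L * (t * Real.sqrt (sqnorm v)) * Real.sqrt (sqnorm v)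
          = L * t * (Real.sqrt (sqnorm v) * Real.sqrt (sqnorm v)) := by ring
        _ = L * t * sqnorm v := by rw [hmul]
    linarith
  have hcont : ContinuousOn φ (Set.Icc (0:ℝ) 1) :=
    fun t _ => ((hder t).continuousAt).continuousWithinAt
  have hdiffOn : DifferentiableOn ℝ φ (interior (Set.Icc (0:ℝ) 1)) :=
    fun t _ => ((hder t).differentiableAt).differentiableWithinAt
  have hanti := antitoneOn_of_deriv_nonpos (convex_Icc 0 1) hcont hdiffOn hderiv_le
  have h01 := hanti (Set.left_mem_Icc.2 zero_le_one) (Set.right_mem_Icc.2 zero_le_one)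
    zero_le_one
  simp only [hφ, zero_smul, add_zero, one_smul, zero_mul, sub_zero, one_pow, mul_one,
    zero_pow, mul_zero, ne_eq, OfNat.ofNat_ne_zero, not_false_eq_true] at h01
  linarith

/-- Strong convexity lower bound. -/
lemma strong_lemma (m : ℝ) (hm : 0 ≤ m)
    (hdiff : ∀ x v, HasDerivAt (fun t : ℝ => f (x + t • v)) (dot (f' x) v) 0)
    (hstrong : ∀ x y, m * sqnorm (x - y) ≤ dot (f' x - f' y) (x - y))
    (x v : Fin n → ℝ) :
    f x + dot (f' x) v + m / 2 * sqnorm v ≤ f (x + v) := by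
  set φ : ℝ → ℝ := fun t => f (x + t • v) - t * dot (f' x) v - m / 2 * t ^ 2 * sqnorm v with hφ
  have hder : ∀ t : ℝ, HasDerivAt φ
      (dot (f' (x + t • v)) v - dot (f' x) v - m * t * sqnorm v) t := by
    intro t
    have h1 := line_deriv f f' hdiff x v t
    have h2 : HasDerivAt (fun s : ℝ => s * dot (f' x) v) (dot (f' x) v) t := by
      simpa using (hasDerivAt_id t).mul_const (dot (f' x) v)
    have h3 : HasDerivAt (fun s : ℝ => m / 2 * s ^ 2 * sqnorm v) (m * t * sqnorm v) t := by
      have := ((hasDerivAt_pow 2 t).const_mul (m / 2)).mul_const (sqnorm v)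
      refine this.congr_deriv ?_
      simp only [show (2:ℕ) - 1 = 1 from rfl, pow_one]
      ring
    exact (h1.sub h2).sub h3
  have hderiv_ge : ∀ t ∈ interior (Set.Icc (0:ℝ) 1), 0 ≤ deriv φ t := by
    intro t ht
    rw [interior_Icc, Set.mem_Ioo] at ht
    rw [(hder t).deriv]
    have hst := hstrong (x + t • v) x
    have hx : x + t • v - x = t • v := by abel
    rw [hx, sqnorm_smul] at hst
    have hdot : dot (f' (x + t • v) - f' x) (t • v) = t * dot (f' (x + t • v) - f' x) v := by
      simp only [dot, Pi.smul_apply, smul_eq_mul, Finset.mul_sum]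
      exact Finset.sum_congr rfl fun i _ => by ring
    rw [hdot, dot_sub_left] at hst
    have ht1 : 0 < t := ht.1
    rw [show m * (t ^ 2 * sqnorm v) = t * (m * t * sqnorm v) from by ring] at hst
    have h5 := le_of_mul_le_mul_left hst ht1
    linarith
  have hcont : ContinuousOn φ (Set.Icc (0:ℝ) 1) :=
    fun t _ => ((hder t).continuousAt).continuousWithinAt
  have hdiffOn : DifferentiableOn ℝ φ (interior (Set.Icc (0:ℝ) 1)) :=
    fun t _ => ((hder t).differentiableAt).differentiableWithinAt
  have hmono := monotoneOn_of_deriv_nonneg (convex_Icc 0 1) hcont hdiffOn hderiv_ge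
  have h01 := hmono (Set.left_mem_Icc.2 zero_le_one) (Set.right_mem_Icc.2 zero_le_one)
    zero_le_one
  simp only [hφ, zero_smul, add_zero, one_smul, zero_mul, sub_zero, one_pow, mul_one,
    zero_pow, mul_zero, ne_eq, OfNat.ofNat_ne_zero, not_false_eq_true] at h01
  linarith

end deriv

theorem key_descent_inequality {n : ℕ} (f g : (Fin n → ℝ) → ℝ)
    (f' : (Fin n → ℝ) → (Fin n → ℝ)) (L m : ℝ) (hL : 0 < L) (hm : 0 ≤ m)
    (hfconv : ConvexOn ℝ Set.univ f) (hgconv : ConvexOn ℝ Set.univ g)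
    (hdiff : ∀ x v, HasDerivAt (fun t : ℝ => f (x + t • v)) (dot (f' x) v) 0)
    (hsmooth : ∀ x y, Real.sqrt (sqnorm (f' x - f' y)) ≤ L * Real.sqrt (sqnorm (x - y)))
    (hstrong : ∀ x y, m * sqnorm (x - y) ≤ dot (f' x - f' y) (x - y))
    (U : Matrix (Fin n) (Fin n) ℝ) (hUsymm : U.IsSymm)
    (hUL : (U - L • (1 : Matrix (Fin n) (Fin n) ℝ)).PosSemidef)
    (x xplus : Fin n → ℝ)
    (hxplus : IsMinOn (fun v => g v + (1 / 2) *
        dot ((x - U⁻¹.mulVec (f' x)) - v) (U.mulVec ((x - U⁻¹.mulVec (f' x)) - v)))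
      Set.univ xplus) :
    ∀ z, f xplus + g xplus ≤
      (f z + g z) + dot (U.mulVec (x - xplus)) (x - z) - (m / 2) * sqnorm (z - x)
        - (1 / 2) * dot (U.mulVec (x - xplus)) (U⁻¹.mulVec (U.mulVec (x - xplus))) := by
  intro z
  -- symmetry of U in dot products
  have hsym : ∀ p q : Fin n → ℝ, dot (U.mulVec p) q = dot p (U.mulVec q) := by
    intro p q
    rw [dot_eq, dot_eq, dotProduct_mulVec, ← vecMul_transpose, hUsymm.eq]
  -- U dominates L on the diagonal
  have hULkey : ∀ d : Fin n → ℝ, L * sqnorm d ≤ dot d (U.mulVec d) := by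
    intro d
    have h := hUL.dotProduct_mulVec_nonneg d
    simp only [star_trivial, sub_mulVec, smul_mulVec, one_mulVec, dotProduct_sub,
      dotProduct_smul, smul_eq_mul] at h
    have e1 : dot d (U.mulVec d) = d ⬝ᵥ U *ᵥ d := rfl
    have e2 : sqnorm d = d ⬝ᵥ d := rfl
    rw [e1, e2]
    linarith
  -- U is positive definite, hence invertible
  have hsqpos : ∀ d : Fin n → ℝ, d ≠ 0 → 0 < sqnorm d := by
    intro d hd
    rcases Function.ne_iff.1 hd with ⟨i, hi⟩
    refine Finset.sum_pos' (fun j _ => mul_self_nonneg _) ⟨i, Finset.mem_univ i, ?_⟩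
    simpa using mul_self_pos.2 hi
  have hUpd : U.PosDef := by
    refine Matrix.PosDef.of_dotProduct_mulVec_pos ?_ ?_
    · rw [Matrix.IsHermitian, conjTranspose_eq_transpose_of_trivial, hUsymm.eq]
    · intro d hd
      have h1 := hULkey d
      have h2 := hsqpos d hd
      have e1 : dot d (U.mulVec d) = d ⬝ᵥ U *ᵥ d := rfl
      simp only [star_trivial]
      nlinarith
  have hdet : IsUnit U.det := hUpd.det_pos.ne'.isUnit
  have hinv1 : ∀ p, U.mulVec (U⁻¹.mulVec p) = p := by
    intro p; rw [mulVec_mulVec, Matrix.mul_nonsing_inv U hdet, one_mulVec]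
  have hinv2 : ∀ p, U⁻¹.mulVec (U.mulVec p) = p := by
    intro p; rw [mulVec_mulVec, Matrix.nonsing_inv_mul U hdet, one_mulVec]
  -- notation
  set w : Fin n → ℝ := x - U⁻¹.mulVec (f' x) with hw
  set a : Fin n → ℝ := w - xplus with ha
  set b : Fin n → ℝ := z - xplus with hb
  set B : ℝ := dot (U.mulVec a) b with hB
  set C : ℝ := dot b (U.mulVec b) with hC
  have hC0 : 0 ≤ C := le_trans (mul_nonneg hL.le (sqnorm_nonneg b)) (hULkey b)
  -- prox optimality, first-order condition
  have prox_key : ∀ t : ℝ, 0 < t → t ≤ 1 → g xplus ≤ g z - B + t / 2 * C := by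
    intro t ht0 ht1
    have h1 := hxplus (Set.mem_univ (xplus + t • b))
    simp only [Set.mem_setOf_eq] at h1
    rw [← ha] at h1
    have h2 : g (xplus + t • b) ≤ (1 - t) * g xplus + t * g z := by
      have hpt : (1 - t) • xplus + t • z = xplus + t • b := by
        rw [hb]; module
      have hcv := hgconv.2 (Set.mem_univ xplus) (Set.mem_univ z)
        (by linarith : (0:ℝ) ≤ 1 - t) ht0.le (by ring)
      rw [hpt] at hcv
      simpa using hcv
    have hwv : w - (xplus + t • b) = a - t • b := by rw [ha]; abel
    have hexpand : ∀ (p q r s : Fin n → ℝ),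
        dot (p - t • q) (r - t • s)
          = dot p r - t * dot p s - t * dot q r + t ^ 2 * dot q s := by
      intro p q r s
      simp only [dot, Pi.sub_apply, Pi.smul_apply, smul_eq_mul, Finset.mul_sum,
        ← Finset.sum_sub_distrib, ← Finset.sum_add_distrib]
      exact Finset.sum_congr rfl fun i _ => by ring
    have hexp : dot (a - t • b) (U.mulVec (a - t • b))
        = dot a (U.mulVec a) - 2 * t * B + t ^ 2 * C := by
      have hmv : U.mulVec (a - t • b) = U.mulVec a - t • U.mulVec b := by
        rw [mulVec_sub, mulVec_smul]
      rw [hmv, hexpand]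
      have e1 : dot a (U.mulVec b) = B := by rw [hB, hsym]
      have e2 : dot b (U.mulVec a) = B := by rw [hB, dot_comm]
      rw [e1, e2, ← hC]
      ring
    rw [hwv, hexp] at h1
    have h3 : t * (g xplus - g z + B - t / 2 * C) ≤ t * 0 := by nlinarith
    have h4 := le_of_mul_le_mul_left h3 ht0
    linarith
  have P3 : g xplus + B ≤ g z := by
    rcases eq_or_lt_of_le hC0 with hCz | hCpos
    · have := prox_key 1 one_pos le_rfl
      rw [← hCz] at this
      linarith
    · by_contra hcon
      push_neg at hcon
      set D : ℝ := g xplus + B - g z with hD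
      have hD0 : 0 < D := by rw [hD]; linarith
      have ht0 : 0 < min 1 (D / C) := lt_min one_pos (div_pos hD0 hCpos)
      have hk := prox_key (min 1 (D / C)) ht0 (min_le_left _ _)
      have htC : min 1 (D / C) * C ≤ D := by
        rw [← le_div_iff₀ hCpos]
        exact min_le_right _ _
      linarith
  -- rewrite B
  have hUa : U.mulVec a = U.mulVec (x - xplus) - f' x := by
    rw [ha, hw]
    have hre : x - U⁻¹.mulVec (f' x) - xplus = (x - xplus) - U⁻¹.mulVec (f' x) := by abel
    rw [hre, mulVec_sub, hinv1]
  have hBrw : B = dot (U.mulVec (x - xplus)) b - dot (f' x) b := by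
    rw [hB, hUa, dot_sub_left]
  -- descent and strong convexity
  have P1 : f xplus ≤ f x + dot (f' x) (xplus - x) + L / 2 * sqnorm (xplus - x) := by
    have h := descent_lemma f f' L hL hdiff hsmooth x (xplus - x)
    rwa [add_sub_cancel] at h
  have P2 : f x + dot (f' x) (z - x) + m / 2 * sqnorm (z - x) ≤ f z := by
    have h := strong_lemma f f' m hm hdiff hstrong x (z - x)
    rwa [add_sub_cancel] at h
  -- dot product identities
  set d : Fin n → ℝ := x - xplus with hd
  have hgrad_split : dot (f' x) (z - x) = dot (f' x) (xplus - x) + dot (f' x) b := by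
    have hzx : z - x = (xplus - x) + b := by rw [hb]; abel
    rw [hzx, dot_add_right]
  have hUd_split : dot (U.mulVec d) b
      = -(dot (U.mulVec d) (x - z)) + dot (U.mulVec d) d := by
    have hbb : b = -(x - z) + d := by rw [hb, hd]; abel
    rw [hbb, dot_add_right, dot_neg_right]
  have hfinal : dot (U.mulVec d) (U⁻¹.mulVec (U.mulVec d)) = dot d (U.mulVec d) := by
    rw [hinv2, dot_comm]
  have hN : sqnorm (xplus - x) = sqnorm d := sqnorm_neg_sub _ _
  have hcomm : dot (U.mulVec d) d = dot d (U.mulVec d) := dot_comm _ _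
  have hkey := hULkey d
  rw [hN] at P1
  linarith
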